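/- arXiv:1412.3871 — 5 statements merged into one kernel-verified Lean document; each statement's English description precedes it below -/
import Mathlib

section
/- If 1 ≤ p < ∞, b ≠ 0, and |a| > |b|^{1/p}, then for every g ∈ L^p(ℝ) the series f = −Σ_{n=1}^∞ (1/a)^n T_{1/b}^n g converges absolutely in L^p(ℝ) and satisfies f − a·T_b f = g. -/
open MeasureTheory

set_option maxHeartbeats 1000000 in
set_option synthInstance.maxHeartbeats 400000 in
/-- If `1 ≤ p < ∞`, `b ≠ 0`, `|a| > |b|^{1/p}`, `T = T_b` and `S = T_{1/b}` are the
composition operators on `L^p(ℝ)`, then for every `g ∈ L^p(ℝ)` the series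
`-∑_{n≥1} (1/a)ⁿ Sⁿ g` converges absolutely in `L^p(ℝ)` and its sum `f`
satisfies `f - a • T f = g`. -/
theorem stmt3 (p a b : ℝ) (hp : 1 ≤ p) [Fact (1 ≤ ENNReal.ofReal p)] (hb : b ≠ 0)
    (hab : |a| > |b| ^ (1 / p))
    (T S : Lp ℝ (ENNReal.ofReal p) (volume : Measure ℝ) →L[ℝ]
        Lp ℝ (ENNReal.ofReal p) (volume : Measure ℝ))
    (hT : ∀ f, (T f : ℝ → ℝ) =ᵐ[volume] fun x => f (b * x))
    (hS : ∀ f, (S f : ℝ → ℝ) =ᵐ[volume] fun x => f (b⁻¹ * x))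
    (g : Lp ℝ (ENNReal.ofReal p) (volume : Measure ℝ)) :
    Summable (fun n : ℕ => ‖(1 / a) ^ (n + 1) • (S ^ (n + 1)) g‖) ∧
    (-∑' n : ℕ, (1 / a) ^ (n + 1) • (S ^ (n + 1)) g) -
        a • T (-∑' n : ℕ, (1 / a) ^ (n + 1) • (S ^ (n + 1)) g) = g := by
  have hp0 : 0 < p := lt_of_lt_of_le one_pos hp
  have hqtop : ENNReal.ofReal p ≠ ⊤ := ENNReal.ofReal_ne_top
  have hbpos : (0:ℝ) < |b| := abs_pos.mpr hb
  have hbp_pos : (0:ℝ) < |b| ^ (1/p) := Real.rpow_pos_of_pos hbpos _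
  have hapos : (0:ℝ) < |a| := lt_trans hbp_pos hab
  have ha : a ≠ 0 := fun h => by simp [h] at hapos
  -- norm of S
  have hSnorm : ∀ f : Lp ℝ (ENNReal.ofReal p) volume, ‖S f‖ = |b| ^ (1/p) * ‖f‖ := by
    intro f
    have hmap : Measure.map (fun x : ℝ => b⁻¹ * x) volume
        = ENNReal.ofReal |b| • volume := by
      rw [Real.map_volume_mul_left (inv_ne_zero hb), inv_inv]
    have hmeas : AEStronglyMeasurable (f : ℝ → ℝ)
        (Measure.map (fun x : ℝ => b⁻¹ * x) volume) := by
      rw [hmap]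
      exact (Lp.aestronglyMeasurable f).mono_ac Measure.smul_absolutelyContinuous
    have h2 : eLpNorm (fun x => f (b⁻¹ * x)) (ENNReal.ofReal p) volume
        = eLpNorm (f : ℝ → ℝ) (ENNReal.ofReal p)
            (Measure.map (fun x : ℝ => b⁻¹ * x) volume) :=
      (eLpNorm_map_measure hmeas (measurable_const_mul b⁻¹).aemeasurable).symm
    have h3 : eLpNorm (f : ℝ → ℝ) (ENNReal.ofReal p) (ENNReal.ofReal |b| • volume)
        = (ENNReal.ofReal |b|) ^ ((1/(ENNReal.ofReal p)).toReal)
            • eLpNorm (f : ℝ → ℝ) (ENNReal.ofReal p) volume :=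
      eLpNorm_smul_measure_of_ne_top hqtop _ _
    have hq1 : (1/(ENNReal.ofReal p)).toReal = 1/p := by
      rw [one_div, one_div, ← ENNReal.ofReal_inv_of_pos hp0,
        ENNReal.toReal_ofReal (by positivity)]
    rw [Lp.norm_def, Lp.norm_def, eLpNorm_congr_ae (hS f), h2, hmap, h3, hq1,
      smul_eq_mul, ENNReal.toReal_mul, ← ENNReal.toReal_rpow,
      ENNReal.toReal_ofReal (abs_nonneg b)]
  have hSpow : ∀ (n : ℕ) (f : Lp ℝ (ENNReal.ofReal p) volume),
      ‖(S ^ n) f‖ = (|b| ^ (1/p)) ^ n * ‖f‖ := by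
    intro n
    induction n with
    | zero => intro f; simp
    | succ n ih =>
      intro f
      rw [pow_succ, ContinuousLinearMap.mul_apply, ih, hSnorm, pow_succ]
      ring
  -- summability
  have hr1 : |b| ^ (1/p) / |a| < 1 := (div_lt_one hapos).mpr hab
  have hr0 : (0:ℝ) ≤ |b| ^ (1/p) / |a| := le_of_lt (div_pos hbp_pos hapos)
  have hbound : ∀ n : ℕ, ‖(1 / a) ^ (n + 1) • (S ^ (n + 1)) g‖
      = (|b| ^ (1/p) / |a|) ^ (n+1) * ‖g‖ := by
    intro n
    rw [norm_smul, hSpow, Real.norm_eq_abs, abs_pow, abs_div, abs_one, div_pow]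
    ring
  have hsum1 : Summable (fun n : ℕ => ‖(1 / a) ^ (n + 1) • (S ^ (n + 1)) g‖) := by
    have h0 := (summable_geometric_of_lt_one hr0 hr1).mul_right ‖g‖
    have h1 : Summable (fun n : ℕ => (|b| ^ (1/p) / |a|) ^ (n+1) * ‖g‖) :=
      (summable_nat_add_iff 1).mpr h0
    exact h1.congr fun n => (hbound n).symm
  refine ⟨hsum1, ?_⟩
  set u : ℕ → Lp ℝ (ENNReal.ofReal p) volume
    := fun n => (1 / a) ^ n • (S ^ n) g with hudef
  have hsumu1 : Summable (fun n => u (n+1)) := Summable.of_norm hsum1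
  have hsumu : Summable u := (summable_nat_add_iff 1).mp hsumu1
  -- T S = id
  have hqmp : Measure.QuasiMeasurePreserving (fun x : ℝ => b * x) volume volume :=
    ⟨(measurable_const_mul b), by
      rw [Real.map_volume_mul_left hb]; exact Measure.smul_absolutelyContinuous⟩
  have hTS : ∀ f : Lp ℝ (ENNReal.ofReal p) volume, T (S f) = f := by
    intro f
    apply Lp.ext
    refine (hT (S f)).trans ?_
    have h1 : (fun x => (S f : ℝ → ℝ) (b * x)) =ᵐ[volume]
        fun x => (f : ℝ → ℝ) (b⁻¹ * (b * x)) := (hS f).comp_tendsto hqmp.tendsto_ae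
    refine h1.trans ?_
    filter_upwards with x
    rw [inv_mul_cancel_left₀ hb]
  have hTu : ∀ n : ℕ, a • T (u (n+1)) = u n := by
    intro n
    rw [hudef]
    simp only
    have hstep : (S ^ (n+1)) g = S ((S ^ n) g) := by
      rw [pow_succ' S n, ContinuousLinearMap.mul_apply]
    rw [T.map_smul, hstep, hTS, smul_smul]
    congr 1
    field_simp
    ring_nf; simp [ha]
  -- final computation
  have htsum : ∑' n, u n = u 0 + ∑' n, u (n+1) := Summable.tsum_eq_zero_add hsumu
  have hu0 : u 0 = g := by simp [hudef]
  have key : a • T (-∑' n : ℕ, u (n+1)) = -∑' n, u n := by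
    rw [map_neg, smul_neg, neg_inj, ContinuousLinearMap.map_tsum T hsumu1,
      ← tsum_const_smul'' a]
    exact tsum_congr hTu
  show (-∑' n : ℕ, u (n+1)) - a • T (-∑' n : ℕ, u (n+1)) = g
  rw [key, sub_neg_eq_add, htsum, hu0]
  abel
end

section
/- If 1 ≤ p < ∞, b ≠ 0, and |a| ≠ |b|^{1/p}, then for every g ∈ L^p(ℝ) there exists a unique f ∈ L^p(ℝ) (unique up to almost-everywhere equality) satisfying f(x) − a f(bx) = g(x) for almost all x. -/
set_option maxHeartbeats 1000000
set_option synthInstance.maxHeartbeats 400000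

open MeasureTheory

namespace Stmt5Aux

noncomputable section

variable {p : ℝ}

lemma qmp (c : ℝ) (hc : c ≠ 0) :
    Measure.QuasiMeasurePreserving (fun x : ℝ => c * x) volume volume :=
  ⟨measurable_const_mul c, by
    rw [show (fun x : ℝ => c * x) = (c * ·) from rfl, Real.map_volume_mul_left hc]
    exact Measure.smul_absolutelyContinuous⟩

lemma eLpNorm_comp (hp : 1 ≤ p) (c : ℝ) (hc : c ≠ 0) (f : ℝ → ℝ) :
    eLpNorm (fun x => f (c * x)) (ENNReal.ofReal p) volume
      = ENNReal.ofReal (|c|⁻¹ ^ (1 / p)) * eLpNorm f (ENNReal.ofReal p) volume := by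
  have hemb : MeasurableEmbedding (fun x : ℝ => c * x) := by
    have := (Homeomorph.mulLeft₀ c hc).measurableEmbedding
    simpa [Homeomorph.coe_mulLeft₀] using this
  have h1 := hemb.eLpNorm_map_measure (μ := volume) (g := f) (p := ENNReal.ofReal p)
  rw [show Measure.map (fun x : ℝ => c * x) volume = Measure.map (c * ·) volume from rfl,
    Real.map_volume_mul_left hc,
    eLpNorm_smul_measure_of_ne_zero (by simp [hc] : ENNReal.ofReal |c⁻¹| ≠ 0)] at h1
  have hc' : (0:ℝ) < |c⁻¹| := abs_pos.mpr (inv_ne_zero hc)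
  have hp0 : (0:ℝ) < p := lt_of_lt_of_le one_pos hp
  have htr : (1 / ENNReal.ofReal p).toReal = 1 / p := by
    rw [one_div, ENNReal.toReal_inv, ENNReal.toReal_ofReal hp0.le, one_div]
  rw [htr, smul_eq_mul, ENNReal.ofReal_rpow_of_pos hc', abs_inv] at h1
  simpa [Function.comp_def] using h1.symm

lemma memLp_comp (hp : 1 ≤ p) (c : ℝ) (hc : c ≠ 0) {f : ℝ → ℝ}
    (hf : MemLp f (ENNReal.ofReal p) volume) :
    MemLp (fun x => f (c * x)) (ENNReal.ofReal p) volume := by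
  refine ⟨hf.1.comp_quasiMeasurePreserving (qmp c hc), ?_⟩
  rw [eLpNorm_comp hp c hc]
  exact ENNReal.mul_lt_top ENNReal.ofReal_lt_top hf.2

variable [Fact (1 ≤ ENNReal.ofReal p)]

/-- Composition with `x ↦ c * x` as a map on `Lp`. -/
def Tfun (hp : 1 ≤ p) (c : ℝ) (hc : c ≠ 0) (F : Lp ℝ (ENNReal.ofReal p) (volume : Measure ℝ)) :
    Lp ℝ (ENNReal.ofReal p) (volume : Measure ℝ) :=
  (memLp_comp hp c hc (Lp.memLp F)).toLp _

lemma Tfun_coe (hp : 1 ≤ p) (c : ℝ) (hc : c ≠ 0) (F : Lp ℝ (ENNReal.ofReal p) (volume : Measure ℝ)) :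
    Tfun hp c hc F =ᵐ[volume] fun x => F (c * x) :=
  MemLp.coeFn_toLp _

lemma Tfun_norm (hp : 1 ≤ p) (c : ℝ) (hc : c ≠ 0) (F : Lp ℝ (ENNReal.ofReal p) (volume : Measure ℝ)) :
    ‖Tfun hp c hc F‖ = |c|⁻¹ ^ (1 / p) * ‖F‖ := by
  rw [Tfun, Lp.norm_toLp, eLpNorm_comp hp c hc, ENNReal.toReal_mul,
    ENNReal.toReal_ofReal (Real.rpow_nonneg (inv_nonneg.mpr (abs_nonneg c)) _), Lp.norm_def]

/-- Composition with `x ↦ c * x` as a continuous linear map on `Lp`. -/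
def T (hp : 1 ≤ p) (c : ℝ) (hc : c ≠ 0) :
    Lp ℝ (ENNReal.ofReal p) (volume : Measure ℝ) →L[ℝ] Lp ℝ (ENNReal.ofReal p) (volume : Measure ℝ) :=
  LinearMap.mkContinuous
    { toFun := Tfun hp c hc
      map_add' := fun F G => by
        refine Lp.ext ?_
        filter_upwards [Tfun_coe hp c hc (F + G), Tfun_coe hp c hc F, Tfun_coe hp c hc G,
          Lp.coeFn_add (Tfun hp c hc F) (Tfun hp c hc G),
          (qmp c hc).ae_eq_comp (Lp.coeFn_add F G)] with x h1 h2 h3 h4 h5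
        simp only [Function.comp] at h5
        rw [h1, h5, h4]
        simp only [Pi.add_apply]
        rw [h2, h3]
      map_smul' := fun r F => by
        refine Lp.ext ?_
        filter_upwards [Tfun_coe hp c hc (r • F), Tfun_coe hp c hc F,
          Lp.coeFn_smul r (Tfun hp c hc F),
          (qmp c hc).ae_eq_comp (Lp.coeFn_smul r F)] with x h1 h2 h3 h4
        simp only [Function.comp] at h4
        simp only [RingHom.id_apply]
        rw [h1, h4, h3]
        simp only [Pi.smul_apply, smul_eq_mul]
        rw [h2] }
    (|c|⁻¹ ^ (1 / p))
    (fun F => le_of_eq (Tfun_norm hp c hc F))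

lemma T_coe (hp : 1 ≤ p) (c : ℝ) (hc : c ≠ 0) (F : Lp ℝ (ENNReal.ofReal p) (volume : Measure ℝ)) :
    T hp c hc F =ᵐ[volume] fun x => F (c * x) :=
  Tfun_coe hp c hc F

lemma T_norm_le (hp : 1 ≤ p) (c : ℝ) (hc : c ≠ 0) :
    ‖T hp c hc‖ ≤ |c|⁻¹ ^ (1 / p) :=
  LinearMap.mkContinuous_norm_le _ (Real.rpow_nonneg (inv_nonneg.mpr (abs_nonneg c)) _) _

lemma T_mul (hp : 1 ≤ p) (c : ℝ) (hc : c ≠ 0) (d : ℝ) (hd : d ≠ 0) :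
    T hp c hc * T hp d hd = T hp (d * c) (mul_ne_zero hd hc) := by
  refine ContinuousLinearMap.ext fun F => ?_
  refine Lp.ext ?_
  have h1 : T hp c hc (T hp d hd F) =ᵐ[volume] fun x => (T hp d hd F) (c * x) :=
    T_coe hp c hc _
  have h2 : (fun y => (T hp d hd F) (c * y)) =ᵐ[volume] fun y => F (d * (c * y)) :=
    (qmp c hc).ae_eq_comp (T_coe hp d hd F)
  have h3 : T hp (d * c) (mul_ne_zero hd hc) F =ᵐ[volume] fun x => F (d * c * x) :=
    T_coe hp _ _ F
  filter_upwards [h1, h2, h3] with x e1 e2 e3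
  show (T hp c hc * T hp d hd) F x = _
  rw [ContinuousLinearMap.mul_apply, e1, e2, e3, mul_assoc]

lemma T_congr (hp : 1 ≤ p) {c d : ℝ} (hc : c ≠ 0) (hd : d ≠ 0) (h : c = d) :
    T hp c hc = T hp d hd := by subst h; rfl

lemma T_one (hp : 1 ≤ p) : T hp 1 one_ne_zero = 1 := by
  refine ContinuousLinearMap.ext fun F => ?_
  refine Lp.ext ?_
  filter_upwards [T_coe hp 1 one_ne_zero F] with x e1
  simpa using e1

end

end Stmt5Aux

/-- If `1 ≤ p < ∞`, `b ≠ 0`, and `|a| ≠ |b|^{1/p}`, then for every `g ∈ L^p(ℝ)`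
there is a solution `f ∈ L^p(ℝ)` of `f x - a f (b x) = g x` (a.e.), unique up to
almost-everywhere equality. -/
theorem stmt5 (p a b : ℝ) (hp : 1 ≤ p) (hb : b ≠ 0) (hab : |a| ≠ |b| ^ (1 / p))
    (g : ℝ → ℝ) (hg : MemLp g (ENNReal.ofReal p) volume) :
    ∃ f : ℝ → ℝ, MemLp f (ENNReal.ofReal p) volume ∧
      (∀ᵐ x : ℝ ∂volume, f x - a * f (b * x) = g x) ∧
      ∀ f' : ℝ → ℝ, MemLp f' (ENNReal.ofReal p) volume →
        (∀ᵐ x : ℝ ∂volume, f' x - a * f' (b * x) = g x) → f' =ᵐ[volume] f := by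
  classical
  haveI : Fact (1 ≤ ENNReal.ofReal p) := ⟨by
    rw [← ENNReal.ofReal_one]; exact ENNReal.ofReal_le_ofReal hp⟩
  have hp0 : (0:ℝ) < p := lt_of_lt_of_le one_pos hp
  have hbpos : (0:ℝ) < |b| := abs_pos.mpr hb
  have hbp : (0:ℝ) < |b| ^ (1/p) := Real.rpow_pos_of_pos hbpos _
  set Tb := Stmt5Aux.T (p := p) hp b hb with hTb
  obtain ⟨u, hu⟩ : ∃ u : (Lp ℝ (ENNReal.ofReal p) (volume : Measure ℝ) →L[ℝ]
      Lp ℝ (ENNReal.ofReal p) (volume : Measure ℝ))ˣ, (u : _) = 1 - a • Tb := by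
    rcases hab.lt_or_gt with ha | ha
    · refine ⟨Units.oneSub (a • Tb) ?_, rfl⟩
      calc ‖a • Tb‖ = |a| * ‖Tb‖ := by rw [norm_smul a Tb, Real.norm_eq_abs]
        _ ≤ |a| * (|b|⁻¹ ^ (1/p)) :=
            mul_le_mul_of_nonneg_left (Stmt5Aux.T_norm_le hp b hb) (abs_nonneg a)
        _ < 1 := by
            rw [Real.inv_rpow (abs_nonneg b), ← div_eq_mul_inv, div_lt_one hbp]; exact ha
    · have ha0 : a ≠ 0 := by
        intro h; rw [h, abs_zero] at ha; exact absurd ha (not_lt.mpr hbp.le)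
      set S := Stmt5Aux.T (p := p) hp b⁻¹ (inv_ne_zero hb) with hS
      have hTS : Tb * S = 1 := by
        rw [hTb, hS, Stmt5Aux.T_mul,
          Stmt5Aux.T_congr hp _ one_ne_zero (inv_mul_cancel₀ hb), Stmt5Aux.T_one]
      have hST : S * Tb = 1 := by
        rw [hTb, hS, Stmt5Aux.T_mul,
          Stmt5Aux.T_congr hp _ one_ne_zero (mul_inv_cancel₀ hb), Stmt5Aux.T_one]
      have hnorm : ‖a⁻¹ • S‖ < 1 := by
        have hSle : ‖S‖ ≤ |b| ^ (1/p) := by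
          have := Stmt5Aux.T_norm_le hp b⁻¹ (inv_ne_zero hb)
          rwa [abs_inv, inv_inv] at this
        calc ‖a⁻¹ • S‖ = |a|⁻¹ * ‖S‖ := by rw [norm_smul a⁻¹ S, Real.norm_eq_abs, abs_inv]
          _ ≤ |a|⁻¹ * (|b| ^ (1/p)) :=
              mul_le_mul_of_nonneg_left hSle (inv_nonneg.mpr (abs_nonneg a))
          _ = |b| ^ (1/p) / |a| := by rw [div_eq_mul_inv]; exact mul_comm _ _
          _ < 1 := (div_lt_one (abs_pos.mpr ha0)).mpr ha
      set w := Units.oneSub (a⁻¹ • S) hnorm with hw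
      have pf1 : (-a • Tb) * (-a⁻¹ • S) = 1 := by
        rw [smul_mul_assoc, mul_smul_comm, smul_smul, hTS, neg_mul_neg,
          mul_inv_cancel₀ ha0, one_smul]
      have pf2 : (-a⁻¹ • S) * (-a • Tb) = 1 := by
        rw [smul_mul_assoc, mul_smul_comm, smul_smul, hST, neg_mul_neg,
          inv_mul_cancel₀ ha0, one_smul]
      refine ⟨⟨-a • Tb, -a⁻¹ • S, pf1, pf2⟩ * w, ?_⟩
      show (-a • Tb) * (1 - a⁻¹ • S) = 1 - a • Tb
      rw [mul_sub, mul_one, smul_mul_assoc, mul_smul_comm, smul_smul, hTS,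
        neg_mul, mul_inv_cancel₀ ha0, neg_smul, neg_smul, one_smul, sub_neg_eq_add]
      abel
  set G := hg.toLp g with hG
  set F := (↑u⁻¹ : Lp ℝ (ENNReal.ofReal p) (volume : Measure ℝ) →L[ℝ] Lp ℝ (ENNReal.ofReal p) (volume : Measure ℝ)) G with hF
  have hFG : (↑u : Lp ℝ (ENNReal.ofReal p) (volume : Measure ℝ) →L[ℝ] Lp ℝ (ENNReal.ofReal p) (volume : Measure ℝ)) F = G := by
    rw [hF, ← ContinuousLinearMap.mul_apply, u.mul_inv, ContinuousLinearMap.one_apply]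
  have hFG' : F - a • (Tb F) = G := by
    rw [hu] at hFG
    rwa [ContinuousLinearMap.sub_apply, ContinuousLinearMap.one_apply,
      ContinuousLinearMap.smul_apply] at hFG
  refine ⟨⇑F, Lp.memLp F, ?_, ?_⟩
  · have h0 : ⇑(F - a • (Tb F)) =ᵐ[volume] g := by
      rw [hFG']; exact MemLp.coeFn_toLp hg
    filter_upwards [h0, Lp.coeFn_sub F (a • (Tb F)), Lp.coeFn_smul a (Tb F),
      Stmt5Aux.T_coe hp b hb F] with x e0 e1 e2 e3
    rw [← e0, e1]
    simp only [Pi.sub_apply]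
    rw [e2]
    simp only [Pi.smul_apply, smul_eq_mul]
    rw [e3]
  · intro f' hf' hae'
    set F' := hf'.toLp f' with hF'
    have h0' : ⇑F' =ᵐ[volume] f' := MemLp.coeFn_toLp hf'
    have hcomp : (fun x => F' (b * x)) =ᵐ[volume] fun x => f' (b * x) :=
      (Stmt5Aux.qmp b hb).ae_eq_comp h0'
    have heq : F' - a • (Tb F') = G := by
      refine Lp.ext ?_
      filter_upwards [hae', h0', hcomp, Lp.coeFn_sub F' (a • (Tb F')),
        Lp.coeFn_smul a (Tb F'), Stmt5Aux.T_coe hp b hb F',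
        MemLp.coeFn_toLp hg] with x e0 e1 e2 e3 e4 e5 e6
    -- goal: (F' - a • Tb F') x = G x
      rw [e3]
      simp only [Pi.sub_apply]
      rw [e4]
      simp only [Pi.smul_apply, smul_eq_mul]
      rw [e5, e6, ← e0, e1, e2]
    have hFF : F' = F := by
      have h1 : (↑u : Lp ℝ (ENNReal.ofReal p) (volume : Measure ℝ) →L[ℝ] Lp ℝ (ENNReal.ofReal p) (volume : Measure ℝ)) F'
          = (↑u : Lp ℝ (ENNReal.ofReal p) (volume : Measure ℝ) →L[ℝ] Lp ℝ (ENNReal.ofReal p) (volume : Measure ℝ)) F := by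
        rw [hu, ContinuousLinearMap.sub_apply, ContinuousLinearMap.one_apply,
          ContinuousLinearMap.smul_apply, ContinuousLinearMap.sub_apply,
          ContinuousLinearMap.one_apply, ContinuousLinearMap.smul_apply, heq, hFG']
      have h2 := congrArg (fun H => (↑u⁻¹ : Lp ℝ (ENNReal.ofReal p) (volume : Measure ℝ) →L[ℝ] Lp ℝ (ENNReal.ofReal p) (volume : Measure ℝ)) H) h1
      simpa only [← ContinuousLinearMap.mul_apply, u.inv_mul,
        ContinuousLinearMap.one_apply] using h2
    exact h0'.symm.trans (by rw [hFF])
end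

section
/- Let 0 < |a| < 1 and for k ≥ 1 define ĉ_k : [0,1] → ℝ (viewed as 1-periodic functions on ℝ) by ĉ_k(x) = √(1−a²) Σ_{n=0}^∞ a^n √2 cos(2^{n+1} k π x). Then for all k, l ≥ 1 the L²([0,1]) inner product satisfies: ⟨ĉ_k, ĉ_l⟩ = a^j if l = 2^j k or k = 2^j l for some j ≥ 0, and ⟨ĉ_k, ĉ_l⟩ = 0 otherwise. -/
/-- The Weierstrass cosine function `ĉ_k (x) = √(1-a²) ∑ₙ aⁿ √2 cos (2^{n+1} k π x)`. -/
noncomputable def chatFn (a : ℝ) (k : ℕ) (x : ℝ) : ℝ :=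
  Real.sqrt (1 - a ^ 2) *
    ∑' n : ℕ, a ^ n * (Real.sqrt 2 * Real.cos ((2 : ℝ) ^ (n + 1) * (k : ℝ) * Real.pi * x))


open Real MeasureTheory

lemma cosInt (N : ℤ) (hN : N ≠ 0) : ∫ x in (0:ℝ)..1, Real.cos (2*π*N*x) = 0 := by
  have hc : (2*π*N : ℝ) ≠ 0 := by
    have := Real.pi_ne_zero
    simp [hN, this]
  rw [intervalIntegral.integral_comp_mul_left (fun y => Real.cos y) hc]
  simp
  refine Or.inr ?_
  have h := Real.sin_int_mul_pi (2*N)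
  push_cast at h
  convert h using 2
  ring

lemma orth (p q : ℕ) (hp : p ≠ 0) (hq : q ≠ 0) :
    ∫ x in (0:ℝ)..1, (Real.sqrt 2 * Real.cos (2*π*p*x)) * (Real.sqrt 2 * Real.cos (2*π*q*x))
      = if p = q then (1:ℝ) else 0 := by
  have h2 : Real.sqrt 2 * Real.sqrt 2 = 2 := Real.mul_self_sqrt (by norm_num)
  have heq : ∀ x : ℝ, (Real.sqrt 2 * Real.cos (2*π*p*x)) * (Real.sqrt 2 * Real.cos (2*π*q*x))
      = Real.cos (2*π*((p:ℝ)-(q:ℝ))*x) + Real.cos (2*π*((p:ℝ)+(q:ℝ))*x) := by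
    intro x
    have key := Real.two_mul_cos_mul_cos (2*π*p*x) (2*π*q*x)
    have e1 : (Real.sqrt 2 * Real.cos (2*π*p*x)) * (Real.sqrt 2 * Real.cos (2*π*q*x))
        = (Real.sqrt 2 * Real.sqrt 2) * Real.cos (2*π*p*x) * Real.cos (2*π*q*x) := by ring
    rw [e1, h2, key]
    congr 1 <;> congr 1 <;> ring
  simp_rw [heq]
  have hint1 : IntervalIntegrable (fun x => Real.cos (2*π*((p:ℝ)-(q:ℝ))*x)) volume 0 1 :=
    (Continuous.intervalIntegrable (by continuity) 0 1)
  have hint2 : IntervalIntegrable (fun x => Real.cos (2*π*((p:ℝ)+(q:ℝ))*x)) volume 0 1 :=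
    (Continuous.intervalIntegrable (by continuity) 0 1)
  rw [intervalIntegral.integral_add hint1 hint2]
  have B := cosInt ((p:ℤ)+(q:ℤ)) (by positivity)
  push_cast at B
  rw [B]
  by_cases h : p = q
  · subst h; simp
  · have A := cosInt ((p:ℤ)-(q:ℤ))
      (by simpa [sub_eq_zero] using fun hh => h (by exact_mod_cast hh))
    push_cast at A
    rw [A]
    simp [h]

lemma swap_int {f : ℕ → ℝ → ℝ} (hc : ∀ n, Continuous (f n)) {u : ℕ → ℝ}
    (hu : Summable u) (hb : ∀ n x, ‖f n x‖ ≤ u n) :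
    ∫ x in (0:ℝ)..1, ∑' n, f n x = ∑' n, ∫ x in (0:ℝ)..1, f n x := by
  rw [intervalIntegral.integral_of_le zero_le_one]
  simp_rw [intervalIntegral.integral_of_le zero_le_one]
  refine (MeasureTheory.integral_tsum_of_summable_integral_norm (fun n => ?_) ?_).symm
  · exact (hc n).integrableOn_Ioc
  · refine Summable.of_nonneg_of_le (fun n => integral_nonneg (fun x => norm_nonneg _)) (fun n => ?_) hu
    calc ∫ x in Set.Ioc (0:ℝ) 1, ‖f n x‖
        ≤ ∫ _x in Set.Ioc (0:ℝ) 1, u n := by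
          refine setIntegral_mono_on ((hc n).norm.integrableOn_Ioc) (integrableOn_const (by simp [Real.volume_Ioc]) (by simp))
            measurableSet_Ioc (fun x _ => hb n x)
      _ = u n := by simp [Real.volume_Ioc]

noncomputable def Fa (a : ℝ) (j : ℕ) (n : ℕ) (x : ℝ) : ℝ :=
  a ^ n * (Real.sqrt 2 * Real.cos ((2 : ℝ) ^ (n + 1) * (j : ℝ) * π * x))

noncomputable def Sa (a : ℝ) (j : ℕ) (x : ℝ) : ℝ := ∑' n, Fa a j n x

lemma Fa_cont (a : ℝ) (j n : ℕ) : Continuous (Fa a j n) := by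
  unfold Fa; continuity

lemma Fa_bound (a : ℝ) (j n : ℕ) (x : ℝ) : ‖Fa a j n x‖ ≤ Real.sqrt 2 * |a| ^ n := by
  unfold Fa
  have h1 : |Real.cos ((2 : ℝ) ^ (n + 1) * (j : ℝ) * π * x)| ≤ 1 := Real.abs_cos_le_one _
  have h2 : (0:ℝ) ≤ |a| ^ n := pow_nonneg (abs_nonneg a) n
  have h3 : (0:ℝ) ≤ Real.sqrt 2 := Real.sqrt_nonneg 2
  rw [Real.norm_eq_abs, abs_mul, abs_pow, abs_mul, abs_of_nonneg h3]
  calc |a| ^ n * (Real.sqrt 2 * |Real.cos ((2 : ℝ) ^ (n + 1) * (j : ℝ) * π * x)|)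
      ≤ |a| ^ n * (Real.sqrt 2 * 1) := by
        apply mul_le_mul_of_nonneg_left _ h2
        exact mul_le_mul_of_nonneg_left h1 h3
    _ = Real.sqrt 2 * |a| ^ n := by ring

lemma ugeo (a : ℝ) (ha : |a| < 1) : Summable (fun n : ℕ => Real.sqrt 2 * |a| ^ n) :=
  (summable_geometric_of_lt_one (abs_nonneg a) ha).mul_left _

lemma Sa_cont (a : ℝ) (ha : |a| < 1) (j : ℕ) : Continuous (Sa a j) :=
  continuous_tsum (Fa_cont a j) (ugeo a ha) (fun n x => Fa_bound a j n x)

lemma Sa_bound (a : ℝ) (ha : |a| < 1) (j : ℕ) (x : ℝ) :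
    ‖Sa a j x‖ ≤ ∑' n : ℕ, Real.sqrt 2 * |a| ^ n := by
  have hs : Summable (fun n => ‖Fa a j n x‖) :=
    (ugeo a ha).of_nonneg_of_le (fun n => norm_nonneg _) (fun n => Fa_bound a j n x)
  calc ‖Sa a j x‖ ≤ ∑' n, ‖Fa a j n x‖ := norm_tsum_le_tsum_norm hs
    _ ≤ ∑' n : ℕ, Real.sqrt 2 * |a| ^ n := Summable.tsum_le_tsum (fun n => Fa_bound a j n x) hs (ugeo a ha)

lemma key (a : ℝ) (ha : |a| < 1) (k l : ℕ) (hk : k ≠ 0) (hl : l ≠ 0) :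
    ∫ x in (0:ℝ)..1, chatFn a k x * chatFn a l x
      = (1 - a^2) * ∑' n : ℕ, ∑' m : ℕ,
          (a^n * a^m) * (if 2^n * k = 2^m * l then (1:ℝ) else 0) := by
  have ha2 : a^2 < 1 := by nlinarith [sq_abs a, abs_nonneg a]
  have h1a : (0:ℝ) < 1 - a^2 := by linarith
  set M := ∑' n : ℕ, Real.sqrt 2 * |a| ^ n with hM
  have hM0 : 0 ≤ M := tsum_nonneg (fun n => by positivity)
  have hprod : ∀ x, chatFn a k x * chatFn a l x = (1 - a^2) * (Sa a k x * Sa a l x) := by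
    intro x
    show (Real.sqrt (1-a^2) * Sa a k x) * (Real.sqrt (1-a^2) * Sa a l x) = _
    rw [show (Real.sqrt (1-a^2) * Sa a k x) * (Real.sqrt (1-a^2) * Sa a l x)
        = (Real.sqrt (1-a^2) * Real.sqrt (1-a^2)) * (Sa a k x * Sa a l x) from by ring,
      Real.mul_self_sqrt h1a.le]
  simp_rw [hprod]
  rw [intervalIntegral.integral_const_mul]
  congr 1
  have step1 : ∀ x, Sa a k x * Sa a l x = ∑' n, Fa a k n x * Sa a l x := by
    intro x
    exact (tsum_mul_right).symm
  simp_rw [step1]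
  rw [swap_int (f := fun n x => Fa a k n x * Sa a l x)
      (fun n => (Fa_cont a k n).mul (Sa_cont a ha l))
      ((ugeo a ha).mul_right M)
      (fun n x => by
        rw [norm_mul]
        exact mul_le_mul (Fa_bound a k n x) (Sa_bound a ha l x) (norm_nonneg _)
          (by positivity))]
  congr 1
  funext n
  have step2 : ∀ x, Fa a k n x * Sa a l x = ∑' m, Fa a k n x * Fa a l m x := by
    intro x
    exact (tsum_mul_left).symm
  simp_rw [step2]
  rw [swap_int (f := fun m x => Fa a k n x * Fa a l m x)
      (fun m => (Fa_cont a k n).mul (Fa_cont a l m))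
      (hu := ((ugeo a ha).mul_left (Real.sqrt 2 * |a|^n)))
      (fun m x => by
        rw [norm_mul]
        exact mul_le_mul (Fa_bound a k n x) (Fa_bound a l m x) (norm_nonneg _)
          (by positivity))]
  congr 1
  funext m
  have step3 : ∀ x, Fa a k n x * Fa a l m x
      = (a^n * a^m) * ((Real.sqrt 2 * Real.cos (2*π*((2^n*k : ℕ):ℝ)*x))
          * (Real.sqrt 2 * Real.cos (2*π*((2^m*l : ℕ):ℝ)*x))) := by
    intro x
    unfold Fa
    push_cast
    ring_nf
  simp_rw [step3]
  rw [intervalIntegral.integral_const_mul,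
    orth (2^n*k) (2^m*l) (by positivity) (by positivity)]

set_option maxHeartbeats 1000000

/-- For `0 < |a| < 1` and `k, l ≥ 1`, the `L²([0,1])` inner products of the
functions `ĉ_k` satisfy `⟨ĉ_k, ĉ_l⟩ = aʲ` if `l = 2ʲ k` or `k = 2ʲ l` for some
`j ≥ 0`, and `⟨ĉ_k, ĉ_l⟩ = 0` otherwise. -/
theorem stmt14 (a : ℝ) (ha0 : a ≠ 0) (ha : |a| < 1) :
    ∀ k l : ℕ, 1 ≤ k → 1 ≤ l →
      (∀ j : ℕ, (l = 2 ^ j * k ∨ k = 2 ^ j * l) →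
        (∫ x in (0 : ℝ)..1, chatFn a k x * chatFn a l x) = a ^ j) ∧
      ((¬ ∃ j : ℕ, l = 2 ^ j * k ∨ k = 2 ^ j * l) →
        (∫ x in (0 : ℝ)..1, chatFn a k x * chatFn a l x) = 0) := by
  intro k l hk hl
  have hk0 : k ≠ 0 := by omega
  have hl0 : l ≠ 0 := by omega
  have ha2 : a^2 < 1 := by nlinarith [sq_abs a, abs_nonneg a]
  have h1a : (0:ℝ) < 1 - a^2 := by linarith
  have hgeo : Summable (fun n : ℕ => |a|^n) := summable_geometric_of_lt_one (abs_nonneg a) ha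
  have hDsum : Summable (fun p : ℕ×ℕ =>
      (a^p.1 * a^p.2) * (if 2^p.1*k = 2^p.2*l then (1:ℝ) else 0)) := by
    apply Summable.of_norm_bounded (g := fun p : ℕ×ℕ => |a|^p.1 * |a|^p.2)
      (hgeo.mul_of_nonneg hgeo (fun n => by positivity) (fun n => by positivity))
    intro p
    have : ‖(if 2^p.1*k = 2^p.2*l then (1:ℝ) else 0)‖ ≤ 1 := by
      split_ifs <;> simp
    calc ‖(a^p.1 * a^p.2) * (if 2^p.1*k = 2^p.2*l then (1:ℝ) else 0)‖
        = ‖a^p.1 * a^p.2‖ * ‖(if 2^p.1*k = 2^p.2*l then (1:ℝ) else 0)‖ := norm_mul _ _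
      _ ≤ ‖a^p.1 * a^p.2‖ * 1 := by
          exact mul_le_mul_of_nonneg_left this (norm_nonneg _)
      _ = |a|^p.1 * |a|^p.2 := by
          rw [mul_one, Real.norm_eq_abs, abs_mul, abs_pow, abs_pow]
  have geo : ∀ j : ℕ, (∑' m : ℕ, a^(m+j) * a^m) = a^j * (1-a^2)⁻¹ := by
    intro j
    have he : ∀ m : ℕ, a^(m+j)*a^m = a^j * (a^2)^m := by
      intro m
      calc a^(m+j)*a^m = a^(m+j+m) := (pow_add a (m+j) m).symm
        _ = a^(j+2*m) := by congr 1; omega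
        _ = a^j * (a^2)^m := by rw [pow_add, pow_mul]
    simp_rw [he]
    rw [tsum_mul_left, tsum_geometric_of_lt_one (sq_nonneg a) ha2]
  constructor
  · intro j hj
    rw [key a ha k l hk0 hl0]
    rcases hj with hj | hj
    · rw [← Summable.tsum_comm (f := fun n m : ℕ => (a^n*a^m)*(if 2^n*k = 2^m*l then (1:ℝ) else 0)) hDsum]
      have hinner : ∀ m : ℕ,
          (∑' n : ℕ, (a^n*a^m)*(if 2^n*k = 2^m*l then (1:ℝ) else 0)) = a^(m+j)*a^m := by
        intro m
        have hcond : ∀ n : ℕ, (2^n*k = 2^m*l) ↔ n = m + j := by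
          intro n
          subst hj
          constructor
          · intro h
            have h2 : 2^n*k = 2^(m+j)*k := by rw [h, pow_add]; ring
            have h3 : (2:ℕ)^n = 2^(m+j) :=
              Nat.eq_of_mul_eq_mul_right (Nat.pos_of_ne_zero hk0) h2
            exact Nat.pow_right_injective (le_refl 2) h3
          · intro h; subst h; rw [pow_add]; ring
        have he : ∀ n : ℕ, (a^n*a^m)*(if 2^n*k = 2^m*l then (1:ℝ) else 0)
            = if n = m+j then a^(m+j)*a^m else 0 := by
          intro n
          rw [if_congr (hcond n) rfl rfl]
          split_ifs with h
          · subst h; ring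
          · ring
        simp_rw [he]
        exact tsum_ite_eq (m+j) _
      simp_rw [hinner, geo j]
      field_simp
    · have hinner : ∀ n : ℕ,
          (∑' m : ℕ, (a^n*a^m)*(if 2^n*k = 2^m*l then (1:ℝ) else 0)) = a^(n+j)*a^n := by
        intro n
        have hcond : ∀ m : ℕ, (2^n*k = 2^m*l) ↔ m = n + j := by
          intro m
          subst hj
          constructor
          · intro h
            have h2 : 2^(n+j)*l = 2^m*l := by rw [← h, pow_add]; ring
            have h3 : (2:ℕ)^(n+j) = 2^m :=
              Nat.eq_of_mul_eq_mul_right (Nat.pos_of_ne_zero hl0) h2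
            exact (Nat.pow_right_injective (le_refl 2) h3).symm
          · intro h; subst h; rw [pow_add]; ring
        have he : ∀ m : ℕ, (a^n*a^m)*(if 2^n*k = 2^m*l then (1:ℝ) else 0)
            = if m = n+j then a^(n+j)*a^n else 0 := by
          intro m
          rw [if_congr (hcond m) rfl rfl]
          split_ifs with h
          · subst h; ring
          · ring
        simp_rw [he]
        exact tsum_ite_eq (n+j) _
      simp_rw [hinner, geo j]
      field_simp
  · intro hno
    rw [key a ha k l hk0 hl0]
    have hz : ∀ n m : ℕ, (a^n*a^m)*(if 2^n*k = 2^m*l then (1:ℝ) else 0) = 0 := by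
      intro n m
      rcases eq_or_ne (2^n*k) (2^m*l) with h | h
      · exfalso
        apply hno
        rcases le_total m n with hmn | hmn
        · refine ⟨n - m, Or.inl ?_⟩
          have h2 : 2^m * (2^(n-m)*k) = 2^m * l := by
            rw [← mul_assoc, ← pow_add, Nat.add_sub_cancel' hmn, h]
          exact (Nat.eq_of_mul_eq_mul_left (pow_pos two_pos m) h2).symm
        · refine ⟨m - n, Or.inr ?_⟩
          have h2 : 2^n * (2^(m-n)*l) = 2^n * k := by
            rw [← mul_assoc, ← pow_add, Nat.add_sub_cancel' hmn, h]
          exact (Nat.eq_of_mul_eq_mul_left (pow_pos two_pos n) h2).symm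
      · simp [h]
    simp_rw [hz, tsum_zero, mul_zero]
end

section
/- Let {c_k}_{k≥1} be an orthonormal family in a Hilbert space H, 0 < |a| < 1, and let c̃_k be the orthonormal family defined by c̃_k = ĉ_k for k odd and c̃_k = √(1−a²) ĉ_k − a c_{k/2} for k even, where ĉ_k = √(1−a²) Σ_{n=0}^∞ a^n c_{2^n k}. If h = Σ_{n=1}^∞ α_n c_n with (α_n) square-summable, then ⟨h, c̃_n⟩ = √(1−a²) Σ_{m=0}^∞ a^m α_{n 2^m} for n odd, and ⟨h, c̃_n⟩ = −a α_{n/2} + (1−a²) Σ_{m=0}^∞ a^m α_{n 2^m} for n even. -/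
open scoped RealInnerProductSpace

/-- `ĉ_k = √(1-a²) ∑ₙ aⁿ c_{2ⁿ k}`. -/
noncomputable def chatVec {H : Type*} [NormedAddCommGroup H] [InnerProductSpace ℝ H]
    (c : ℕ → H) (a : ℝ) (k : ℕ) : H :=
  Real.sqrt (1 - a ^ 2) • ∑' n : ℕ, a ^ n • c (2 ^ n * k)

/-- `c̃_k = ĉ_k` for odd `k`, and `c̃_k = √(1-a²) ĉ_k - a c_{k/2}` for even `k`. -/
noncomputable def ctilVec {H : Type*} [NormedAddCommGroup H] [InnerProductSpace ℝ H]
    (c : ℕ → H) (a : ℝ) (k : ℕ) : H :=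
  if Odd k then chatVec c a k
  else Real.sqrt (1 - a ^ 2) • chatVec c a k - a • c (k / 2)

lemma orthonormal_summable {H : Type*} [NormedAddCommGroup H] [InnerProductSpace ℝ H]
    [CompleteSpace H] {c : ℕ → H} (hc : Orthonormal ℝ c) {f : ℕ → ℝ}
    (hf : Summable fun n => (f n) ^ 2) : Summable fun n => f n • c n := by
  have := (hc.orthogonalFamily.summable_iff_norm_sq_summable f).2 (by
    simpa [Real.norm_eq_abs, sq_abs] using hf)
  simpa [LinearIsometry.toSpanSingleton_apply] using this

/-- Weierstrass Fourier coefficients: if `h = ∑_{n≥1} αₙ cₙ` with `(αₙ)` square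
summable, then `⟨h, c̃ₙ⟩ = √(1-a²) ∑ₘ aᵐ α_{n 2ᵐ}` for odd `n`, and
`⟨h, c̃ₙ⟩ = -a α_{n/2} + (1-a²) ∑ₘ aᵐ α_{n 2ᵐ}` for even `n`. -/
theorem stmt17 {H : Type*} [NormedAddCommGroup H] [InnerProductSpace ℝ H]
    [CompleteSpace H] (c : ℕ → H) (hc : Orthonormal ℝ c)
    (a : ℝ) (ha0 : a ≠ 0) (ha : |a| < 1)
    (α : ℕ → ℝ) (hα : Summable fun n => (α n) ^ 2)
    (h : H) (hh : h = ∑' n : ℕ, α (n + 1) • c (n + 1)) :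
    ∀ n : ℕ, 1 ≤ n →
      (Odd n → ⟪h, ctilVec c a n⟫ =
        Real.sqrt (1 - a ^ 2) * ∑' m : ℕ, a ^ m * α (n * 2 ^ m)) ∧
      (Even n → ⟪h, ctilVec c a n⟫ =
        -a * α (n / 2) + (1 - a ^ 2) * ∑' m : ℕ, a ^ m * α (n * 2 ^ m)) := by
  have ha2 : a ^ 2 < 1 := by
    have := abs_nonneg a
    nlinarith [sq_abs a]
  have hsq : Real.sqrt (1 - a ^ 2) * Real.sqrt (1 - a ^ 2) = 1 - a ^ 2 :=
    Real.mul_self_sqrt (by linarith)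
  -- summability of the series for h
  have hc1 : Orthonormal ℝ (fun n : ℕ => c (n + 1)) :=
    hc.comp _ (fun x y hxy => by omega)
  have hsum : Summable fun n : ℕ => α (n + 1) • c (n + 1) :=
    orthonormal_summable hc1 (hα.comp_injective (fun x y hxy => by omega))
  -- Fourier coefficients of h
  have coef : ∀ k : ℕ, 1 ≤ k → ⟪h, c k⟫ = α k := by
    intro k hk
    rw [hh, real_inner_comm]
    have hmap := (innerSL ℝ (c k)).map_tsum hsum
    simp only [innerSL_apply_apply, real_inner_smul_right] at hmap
    rw [hmap, tsum_eq_single (k - 1)]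
    · have hk1 : k - 1 + 1 = k := by omega
      rw [hk1]
      simp [orthonormal_iff_ite.1 hc k k, hc.1 k]
    · intro n hn
      have : k ≠ n + 1 := by omega
      simp [orthonormal_iff_ite.1 hc k (n + 1), this]
  -- inner product with chatVec
  have chatinner : ∀ k : ℕ, 1 ≤ k → ⟪h, chatVec c a k⟫ =
      Real.sqrt (1 - a ^ 2) * ∑' m : ℕ, a ^ m * α (k * 2 ^ m) := by
    intro k hk
    have hinj : Function.Injective fun m : ℕ => 2 ^ m * k := by
      intro x y hxy
      simp only at hxy
      have h2 : (2:ℕ) ^ x = 2 ^ y := by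
        exact Nat.eq_of_mul_eq_mul_right (by omega) hxy
      exact Nat.pow_right_injective (by norm_num) h2
    have hck : Orthonormal ℝ (fun m : ℕ => c (2 ^ m * k)) := hc.comp _ hinj
    have hsum2 : Summable fun m : ℕ => a ^ m • c (2 ^ m * k) := by
      apply orthonormal_summable hck
      have hg : Summable fun m : ℕ => (a ^ 2) ^ m :=
        summable_geometric_of_lt_one (by positivity) ha2
      refine hg.congr fun m => ?_
      rw [← pow_mul, ← pow_mul, mul_comm]
    have hmap := (innerSL ℝ h).map_tsum hsum2
    simp only [innerSL_apply_apply, real_inner_smul_right] at hmap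
    rw [chatVec, real_inner_smul_right, hmap]
    congr 1
    apply tsum_congr
    intro m
    rw [coef _ (by
      have : 1 ≤ 2 ^ m := Nat.one_le_two_pow
      exact Nat.one_le_iff_ne_zero.2 (by positivity)), mul_comm k (2 ^ m)]
  intro n hn
  constructor
  · intro hodd
    rw [ctilVec, if_pos hodd]
    exact chatinner n hn
  · intro heven
    rw [ctilVec, if_neg (by simpa [Nat.odd_iff, Nat.even_iff] using heven)]
    rw [inner_sub_right, real_inner_smul_right, real_inner_smul_right,
      chatinner n hn, coef (n / 2) (by
        obtain ⟨m, hm⟩ := heven; omega)]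
    rw [← mul_assoc, hsq]
    ring
end

section
/- Let 1 ≤ p < ∞, b > 0, and |a| ≠ |b|^{1/p}. If g ∈ L^p(ℝ) vanishes almost everywhere on (−∞, 0), then the unique solution f ∈ L^p(ℝ) of f(x) − a f(bx) = g(x) also vanishes almost everywhere on (−∞, 0). -/
open MeasureTheory
open scoped ENNReal NNReal

/-- Let `1 ≤ p < ∞`, `b > 0`, `|a| ≠ |b|^{1/p}`. If `g ∈ L^p(ℝ)` vanishes a.e. on
`(-∞, 0)`, then any (hence the unique) solution `f ∈ L^p(ℝ)` of
`f x - a f (b x) = g x` also vanishes a.e. on `(-∞, 0)`. -/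
theorem stmt18 (p a b : ℝ) (hp : 1 ≤ p) (hb : 0 < b) (hab : |a| ≠ |b| ^ (1 / p))
    (g f : ℝ → ℝ) (hg : MemLp g (ENNReal.ofReal p) volume)
    (hgz : ∀ᵐ x : ℝ ∂volume, x < 0 → g x = 0)
    (hf : MemLp f (ENNReal.ofReal p) volume)
    (heq : ∀ᵐ x : ℝ ∂volume, f x - a * f (b * x) = g x) :
    ∀ᵐ x : ℝ ∂volume, x < 0 → f x = 0 := by
  have hp0 : 0 < p := lt_of_lt_of_le one_pos hp
  set q : ℝ≥0∞ := ENNReal.ofReal p with hq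
  have hq0 : q ≠ 0 := by simp [hq, ENNReal.ofReal_eq_zero, not_le, hp0]
  have hqtop : q ≠ ⊤ := ENNReal.ofReal_ne_top
  set F : ℝ → ℝ := (Set.Iio (0:ℝ)).indicator f with hF
  have hFm : MemLp F q volume := hf.indicator measurableSet_Iio
  -- key a.e. identity : F x = a * F (b * x)
  have key : F =ᵐ[volume] fun x => a * F (b * x) := by
    filter_upwards [heq, hgz] with x h1 h2
    by_cases hx : x < 0
    · have hbx : b * x < 0 := mul_neg_of_pos_of_neg hb hx
      simp only [hF, Set.indicator_of_mem (Set.mem_Iio.2 hx),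
        Set.indicator_of_mem (Set.mem_Iio.2 hbx)]
      have := h2 hx
      linarith [h1]
    · push_neg at hx
      have hbx : 0 ≤ b * x := mul_nonneg hb.le hx
      simp [hF, Set.indicator_of_notMem (show x ∉ Set.Iio 0 from not_lt.2 hx),
        Set.indicator_of_notMem (show b * x ∉ Set.Iio 0 from not_lt.2 hbx)]
  -- norm equality
  have hbne : b ≠ 0 := hb.ne'
  have hmap : Measure.map (fun x : ℝ => b * x) volume
      = ENNReal.ofReal |b⁻¹| • volume := Real.map_volume_mul_left hbne
  have hFb : eLpNorm (fun x => F (b * x)) q volume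
      = (ENNReal.ofReal b⁻¹) ^ (1 / q).toReal * eLpNorm F q volume := by
    have hmeas : AEStronglyMeasurable F (Measure.map (fun x : ℝ => b * x) volume) := by
      rw [hmap]
      exact hFm.1.smul_measure _
    have := eLpNorm_map_measure (p := q) hmeas (measurable_const_mul b).aemeasurable
    rw [hmap] at this
    rw [show (fun x => F (b * x)) = F ∘ (fun x => b * x) from rfl, ← this,
      eLpNorm_smul_measure_of_ne_zero
      (by simp [ENNReal.ofReal_eq_zero, inv_pos, hb, abs_of_pos (inv_pos.2 hb)] : ENNReal.ofReal |b⁻¹| ≠ 0)]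
    rw [abs_of_pos (inv_pos.2 hb)]
    rfl
  have hnorm : eLpNorm F q volume
      = (ENNReal.ofReal |a| * (ENNReal.ofReal b⁻¹) ^ (1 / q).toReal) * eLpNorm F q volume := by
    calc eLpNorm F q volume = eLpNorm (fun x => a * F (b * x)) q volume :=
          eLpNorm_congr_ae key
      _ = ‖a‖ₑ * eLpNorm (fun x => F (b * x)) q volume := by
          simpa [Pi.smul_def] using
            eLpNorm_const_smul (𝕜 := ℝ) a (fun x => F (b * x)) q volume
      _ = _ := by
          rw [hFb, ← mul_assoc, Real.enorm_eq_ofReal_abs]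
  -- the constant is ≠ 1
  have hexp : (1 / q).toReal = 1 / p := by
    rw [one_div, hq, ← ENNReal.ofReal_inv_of_pos hp0,
      ENNReal.toReal_ofReal (inv_nonneg.2 hp0.le), one_div]
  have hC : ENNReal.ofReal |a| * (ENNReal.ofReal b⁻¹) ^ (1 / q).toReal ≠ 1 := by
    rw [hexp, ENNReal.ofReal_rpow_of_pos (inv_pos.2 hb),
      ← ENNReal.ofReal_mul (abs_nonneg a)]
    intro h
    rw [← ENNReal.ofReal_one] at h
    have h' : |a| * b⁻¹ ^ (1 / p) = 1 := by
      have := (ENNReal.ofReal_eq_ofReal_iff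
        (mul_nonneg (abs_nonneg a) (Real.rpow_nonneg (inv_nonneg.2 hb.le) _))
        zero_le_one).1 h
      exact this
    apply hab
    rw [abs_of_pos hb]
    rw [Real.inv_rpow hb.le] at h'
    field_simp at h'
    have hbp : (0:ℝ) < b ^ (1/p) := Real.rpow_pos_of_pos hb _
    rw [h']
  -- conclude eLpNorm F = 0
  have hN : eLpNorm F q volume = 0 := by
    by_contra hNne
    apply hC
    have hlt : eLpNorm F q volume ≠ ⊤ := hFm.2.ne
    have h1 := hnorm
    nth_rewrite 1 [← one_mul (eLpNorm F q volume)] at h1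
    exact ((ENNReal.mul_left_inj hNne hlt).1 h1.symm)
  have hF0 : F =ᵐ[volume] 0 := (eLpNorm_eq_zero_iff hFm.1 hq0).1 hN
  filter_upwards [hF0] with x hx hxneg
  have : F x = f x := Set.indicator_of_mem (Set.mem_Iio.2 hxneg) f
  rw [← this, hx]
  rfl
end
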